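/- Let L be a finite-dimensional Lie algebra over any field F. Then N†(L) = ∩ { A + C_L(A/B) : A/B is a chief factor of L }. -/

import Mathlib

namespace Paper

open LieAlgebra

section AlgDefs

variable (F : Type*) [Field F] (L : Type*) [LieRing L] [LieAlgebra F L]

/-- The nilradical of a Lie algebra: the largest nilpotent ideal (the sup of nilpotent ideals). -/
noncomputable def nilrad : LieIdeal F L :=
  sSup {I : LieIdeal F L | LieModule.IsNilpotent I I}

/-- The nilpotency class of a Lie algebra. -/
noncomputable def nilClass : ℕ := sInf {k | LieModule.lowerCentralSeries F L L k = ⊥}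

/-- A Lie algebra is nilregular if the field has characteristic zero, or characteristic `p > 0`
and its nilradical has nilpotency class less than `p - 1`. -/
noncomputable def Nilregular : Prop :=
  ringChar F = 0 ∨ nilClass F (nilrad F L) < ringChar F - 1

/-- A Lie algebra is solregular if the field has characteristic zero, or characteristic `p > 0`
and its radical has derived length less than `log₂ p`. -/
noncomputable def Solregular : Prop :=
  ringChar F = 0 ∨ 2 ^ LieAlgebra.derivedLength F (LieAlgebra.radical F L) < ringChar F

/-- Regular means nilregular or solregular. -/
noncomputable def Regular : Prop := Nilregular F L ∨ Solregular F L

end AlgDefs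

section IdealDefs

variable {F : Type*} [Field F] {L : Type*} [LieRing L] [LieAlgebra F L]

/-- The centraliser `C_L(I)` of an ideal `I`, as an ideal of `L`. -/
def centralizer (I : LieIdeal F L) : LieIdeal F L where
  carrier := {x : L | ∀ y ∈ I, ⁅x, y⁆ = 0}
  zero_mem' := by intro y hy; simp
  add_mem' := by intro a b ha hb y hy; rw [add_lie, ha y hy, hb y hy, add_zero]
  smul_mem' := by intro c x hx y hy; rw [smul_lie, hx y hy, smul_zero]
  lie_mem := by
    intro x m hm y hy
    have h1 : ⁅x, ⁅m, y⁆⁆ = (0 : L) := by rw [hm y hy, lie_zero]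
    have h2 : ⁅m, ⁅x, y⁆⁆ = (0 : L) := hm _ (I.lie_mem hy)
    show ⁅⁅x, m⁆, y⁆ = (0 : L)
    rw [lie_lie, h1, h2, sub_zero]

/-- The centre `Z(I)` of an ideal `I`, as an ideal of `L`. -/
def idealCenter (I : LieIdeal F L) : LieIdeal F L where
  carrier := {x : L | x ∈ I ∧ ∀ y ∈ I, ⁅x, y⁆ = 0}
  zero_mem' := ⟨I.zero_mem, by intro y hy; simp⟩
  add_mem' := by
    intro a b ha hb
    exact ⟨I.add_mem ha.1 hb.1, fun y hy => by rw [add_lie, ha.2 y hy, hb.2 y hy, add_zero]⟩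
  smul_mem' := by
    intro c x hx
    exact ⟨I.smul_mem c hx.1, fun y hy => by rw [smul_lie, hx.2 y hy, smul_zero]⟩
  lie_mem := by
    intro x m hm
    refine ⟨I.lie_mem hm.1, fun y hy => ?_⟩
    have h1 : ⁅x, ⁅m, y⁆⁆ = (0 : L) := by rw [hm.2 y hy, lie_zero]
    have h2 : ⁅m, ⁅x, y⁆⁆ = (0 : L) := hm.2 _ (I.lie_mem hy)
    show ⁅⁅x, m⁆, y⁆ = (0 : L)
    rw [lie_lie, h1, h2, sub_zero]

/-- The centraliser `C_L(A/B)` of a chief factor, as an ideal of `L`. -/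
def chiefCentralizer (A B : LieIdeal F L) : LieIdeal F L where
  carrier := {x : L | ∀ a ∈ A, ⁅x, a⁆ ∈ B}
  zero_mem' := by intro a ha; simp [B.zero_mem]
  add_mem' := by intro x y hx hy a ha; rw [add_lie]; exact B.add_mem (hx a ha) (hy a ha)
  smul_mem' := by intro c x hx a ha; rw [smul_lie]; exact B.smul_mem c (hx a ha)
  lie_mem := by
    intro x m hm a ha
    show ⁅⁅x, m⁆, a⁆ ∈ B
    rw [lie_lie]
    exact B.sub_mem (B.lie_mem (hm a ha)) (hm _ (A.lie_mem ha))

/-- `A/Z` is a minimal ideal of `L/Z` (via the ideal correspondence). -/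
def IsMinModIdeal (Z A : LieIdeal F L) : Prop :=
  Z < A ∧ ∀ B : LieIdeal F L, Z ≤ B → B ≤ A → B = Z ∨ B = A

/-- `A` is a minimal ideal of `L`. -/
def IsMinimalIdeal (A : LieIdeal F L) : Prop := IsMinModIdeal ⊥ A

/-- An ideal `A` of `L` is quasi-minimal if `A² = A` and `A/Z(A)` is a minimal ideal
of `L/Z(A)`. -/
def IsQuasiMinimal (A : LieIdeal F L) : Prop :=
  ⁅A, A⁆ = A ∧ IsMinModIdeal (idealCenter A) A

end IdealDefs

section MoreDefs

variable (F : Type*) [Field F] (L : Type*) [LieRing L] [LieAlgebra F L]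

/-- `E†(L)`: the subalgebra generated by the quasi-minimal components of `L`. -/
noncomputable def Edagger : LieSubalgebra F L :=
  LieSubalgebra.lieSpan F L (⋃ A ∈ {A : LieIdeal F L | IsQuasiMinimal A}, (A : Set L))

/-- `N†(L) = N(L) + E†(L)`: the quasi-minimal radical of `L`. -/
noncomputable def Ndagger : LieSubalgebra F L :=
  LieIdeal.toLieSubalgebra F L (nilrad F L) ⊔ Edagger F L

/-- The generalised nilradical `N*(L)`: the ideal containing `N = N(L)` with
`N*(L)/N` the sum of all minimal ideals of `L/N` contained in `(N + C_L(N))/N`. -/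
noncomputable def Nstar : LieIdeal F L :=
  nilrad F L ⊔ sSup {A : LieIdeal F L | IsMinModIdeal (nilrad F L) A ∧
    A ≤ nilrad F L ⊔ centralizer (nilrad F L)}

/-- The Frattini ideal: the largest ideal contained in every maximal subalgebra. -/
def frattini : LieIdeal F L :=
  sSup {I : LieIdeal F L | ∀ M : LieSubalgebra F L, IsCoatom M → (I : Set L) ⊆ M}

/-- `Ñ(L)`: the ideal with `Ñ(L)/φ(L) = Soc (L/φ(L))`. -/
noncomputable def Ntilde : LieIdeal F L :=
  frattini F L ⊔ sSup {A : LieIdeal F L | IsMinModIdeal (frattini F L) A}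

/-- A characteristic ideal: one invariant under all derivations. -/
def IsCharIdeal (J : LieIdeal F L) : Prop :=
  ∀ D : LieDerivation F L L, ∀ x ∈ J, D x ∈ J

/-- The characteristic radical `R_c(L)`: the sum of all solvable characteristic ideals. -/
noncomputable def charRadical : LieIdeal F L :=
  sSup {J : LieIdeal F L | LieAlgebra.IsSolvable J ∧ IsCharIdeal F L J}

/-- A subideal: a subalgebra joined to `L` by a chain of successive ideals. -/
def IsSubideal (S : LieSubalgebra F L) : Prop :=
  ∃ n : ℕ, ∃ c : Fin (n + 1) → LieSubalgebra F L,
    c 0 = S ∧ c (Fin.last n) = ⊤ ∧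
    ∀ i : Fin n, c i.castSucc ≤ c i.succ ∧
      ∀ x ∈ c i.succ, ∀ y ∈ c i.castSucc, ⁅x, y⁆ ∈ c i.castSucc

end MoreDefs

section Aux
variable {F : Type*} [Field F] {L : Type*} [LieRing L] [LieAlgebra F L]

lemma mem_centralizer {I : LieIdeal F L} {x : L} :
    x ∈ centralizer I ↔ ∀ y ∈ I, ⁅x, y⁆ = 0 := Iff.rfl

lemma mem_idealCenter {I : LieIdeal F L} {x : L} :
    x ∈ idealCenter I ↔ x ∈ I ∧ ∀ y ∈ I, ⁅x, y⁆ = 0 := Iff.rfl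

lemma mem_chiefCentralizer {A B : LieIdeal F L} {x : L} :
    x ∈ chiefCentralizer A B ↔ ∀ a ∈ A, ⁅x, a⁆ ∈ B := Iff.rfl

lemma idealCenter_le (I : LieIdeal F L) : idealCenter I ≤ I := fun _ h => h.1

lemma lie_idealCenter_eq_bot (I : LieIdeal F L) : ⁅I, idealCenter I⁆ = ⊥ := by
  rw [LieSubmodule.lie_eq_bot_iff]
  intro x hx m hm
  rw [← lie_skew, hm.2 x hx, neg_zero]

/-- Iterated bracket `γ_k(I)` computed with `L`-ideal operations. -/
def gam (I : LieIdeal F L) : ℕ → LieIdeal F L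
  | 0 => I
  | (k+1) => ⁅I, gam I k⁆

lemma gam_le_self (I : LieIdeal F L) : ∀ k, gam I k ≤ I
  | 0 => le_rfl
  | (k+1) => LieSubmodule.lie_le_left _ _

lemma gam_succ_le (I : LieIdeal F L) (k : ℕ) : gam I (k+1) ≤ gam I k := by
  show ⁅I, gam I k⁆ ≤ gam I k
  exact LieSubmodule.lie_le_right _ _

lemma lie_gam_gam_le (I : LieIdeal F L) (k : ℕ) : ⁅gam I k, gam I k⁆ ≤ gam I (k+1) :=
  LieSubmodule.mono_lie (gam_le_self I k) le_rfl

/-- If the subalgebra `I` is nilpotent then the `γ`-series of `I` in `L` vanishes. -/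
lemma gam_eq_bot_of_isNilpotent (I : LieIdeal F L) (h : LieModule.IsNilpotent I I) :
    ∃ k, gam I k = ⊥ := by
  obtain ⟨k, hk⟩ := (LieModule.isNilpotent_iff F I I).mp h
  refine ⟨k, le_bot_iff.mp ?_⟩
  have key : ∀ j, ∀ x ∈ gam I j, ∃ hx : x ∈ I,
      (⟨x, hx⟩ : I) ∈ LieModule.lowerCentralSeries F I I j := by
    intro j
    induction j with
    | zero => exact fun x hx => ⟨hx, LieSubmodule.mem_top _⟩
    | succ j ih =>
        intro x hx
        have hx' : x ∈ LieSubmodule.toSubmodule (⁅I, gam I j⁆ : LieIdeal F L) := hx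
        rw [LieSubmodule.lieIdeal_oper_eq_linear_span'] at hx'
        have : ∀ m ∈ Submodule.span F {m : L | ∃ x ∈ I, ∃ n ∈ gam I j, ⁅x, n⁆ = m},
            ∃ hm : m ∈ I, (⟨m, hm⟩ : I) ∈ LieModule.lowerCentralSeries F I I (j+1) := by
          intro m hm
          refine Submodule.span_induction ?_ ?_ ?_ ?_ hm
          · rintro m ⟨y, hy, n, hn, rfl⟩
            obtain ⟨hnI, hlcs⟩ := ih n hn
            refine ⟨I.lie_mem hnI, ?_⟩
            rw [LieModule.lowerCentralSeries_succ]
            have : (⟨⁅y, n⁆, I.lie_mem hnI⟩ : I) = ⁅(⟨y, hy⟩ : I), (⟨n, hnI⟩ : I)⁆ := rfl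
            rw [this]
            exact LieSubmodule.lie_mem_lie (LieSubmodule.mem_top _) hlcs
          · exact ⟨I.zero_mem, by
              rw [show (⟨(0:L), I.zero_mem⟩ : I) = 0 from rfl]
              exact LieSubmodule.zero_mem _⟩
          · rintro a b - - ⟨ha, ha'⟩ ⟨hb, hb'⟩
            refine ⟨I.add_mem ha hb, ?_⟩
            have : (⟨a + b, I.add_mem ha hb⟩ : I) = (⟨a, ha⟩ : I) + ⟨b, hb⟩ := rfl
            rw [this]; exact (LieModule.lowerCentralSeries F I I (j+1)).add_mem ha' hb'
          · rintro c m - ⟨hm, hm'⟩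
            refine ⟨I.smul_mem c hm, ?_⟩
            have : (⟨c • m, I.smul_mem c hm⟩ : I) = c • (⟨m, hm⟩ : I) := rfl
            rw [this]; exact (LieModule.lowerCentralSeries F I I (j+1)).smul_mem c hm'
        exact this x hx'
  intro x hx
  obtain ⟨hxI, hlcs⟩ := key k x hx
  rw [hk, LieSubmodule.mem_bot] at hlcs
  have : x = 0 := congrArg Subtype.val hlcs
  simp [this]

/-- Conversely, if the `γ`-series of `C` in `L` vanishes then `C` is a nilpotent algebra. -/
lemma isNilpotent_of_gam_eq_bot (C : LieIdeal F L) {n : ℕ} (h : gam C n = ⊥) :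
    LieModule.IsNilpotent C C := by
  refine (LieModule.isNilpotent_iff F C C).mpr ⟨n, ?_⟩
  have key : ∀ j, ∀ x : C, x ∈ LieModule.lowerCentralSeries F C C j → (x : L) ∈ gam C j := by
    intro j
    induction j with
    | zero => exact fun x _ => x.2
    | succ j ih =>
        intro x hx
        rw [LieModule.lowerCentralSeries_succ] at hx
        have hx' : (x : C) ∈ (⁅(⊤ : LieIdeal F C),
            LieModule.lowerCentralSeries F C C j⁆ : LieSubmodule F C C).toSubmodule := hx
        rw [LieSubmodule.lieIdeal_oper_eq_linear_span'] at hx'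
        have : ∀ m : C, m ∈ Submodule.span F {m : C | ∃ x ∈ (⊤ : LieIdeal F C),
            ∃ n ∈ LieModule.lowerCentralSeries F C C j, ⁅x, n⁆ = m} → (m : L) ∈ gam C (j+1) := by
          intro m hm
          refine Submodule.span_induction ?_ ?_ ?_ ?_ hm
          · rintro m ⟨y, -, z, hz, rfl⟩
            have : ((⁅y, z⁆ : C) : L) = ⁅(y : L), (z : L)⁆ := rfl
            rw [this]
            exact LieSubmodule.lie_mem_lie y.2 (ih z hz)
          · simpa using (gam C (j+1)).zero_mem
          · rintro a b - - ha hb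
            simpa using (gam C (j+1)).add_mem ha hb
          · rintro c m - hm
            simpa using (gam C (j+1)).smul_mem c hm
        exact this x hx'
  rw [eq_bot_iff]
  intro x hx
  have := key n x hx
  rw [h, LieSubmodule.mem_bot] at this
  rw [LieSubmodule.mem_bot]
  exact Subtype.ext this

/-- Key stability step: if `C` is perfect, `⁅C,X⁆ ≤ Y` and `C` centralises `Y`,
then `C` centralises `X`. -/
lemma perfect_step {C X Y : LieIdeal F L} (hC : ⁅C, C⁆ = C) (h1 : ⁅C, X⁆ ≤ Y)
    (h2 : ∀ c ∈ C, ∀ y ∈ Y, ⁅c, y⁆ = 0) : ∀ c ∈ C, ∀ x ∈ X, ⁅c, x⁆ = 0 := by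
  intro c hc
  rw [← hC] at hc
  have hc' : c ∈ LieSubmodule.toSubmodule (⁅C, C⁆ : LieIdeal F L) := hc
  rw [LieSubmodule.lieIdeal_oper_eq_linear_span'] at hc'
  refine Submodule.span_induction ?_ ?_ ?_ ?_ hc'
  · rintro c ⟨a, ha, b, hb, rfl⟩ x hx
    have hbx : ⁅b, x⁆ ∈ Y := h1 (LieSubmodule.lie_mem_lie hb hx)
    have hax : ⁅a, x⁆ ∈ Y := h1 (LieSubmodule.lie_mem_lie ha hx)
    rw [lie_lie, h2 a ha _ hbx, h2 b hb _ hax, sub_zero]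
  · intro x hx; rw [zero_lie]
  · rintro a b - - ha hb x hx; rw [add_lie, ha x hx, hb x hx, add_zero]
  · rintro t a - ha x hx; rw [smul_lie, ha x hx, smul_zero]

/-- Dichotomy: a quasi-minimal ideal either centralises an ideal `X` or is contained in it. -/
lemma quasiMinimal_dichotomy {E : LieIdeal F L} (hE : IsQuasiMinimal E) (X : LieIdeal F L) :
    (∀ e ∈ E, ∀ x ∈ X, ⁅e, x⁆ = 0) ∨ E ≤ X := by
  set T : LieIdeal F L := ⁅E, X⁆ with hT
  have hTE : T ≤ E := LieSubmodule.lie_le_left _ _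
  have hmid : idealCenter E ≤ T ⊔ idealCenter E := le_sup_right
  have hmid2 : T ⊔ idealCenter E ≤ E := sup_le hTE (idealCenter_le E)
  rcases hE.2.2 (T ⊔ idealCenter E) hmid hmid2 with h | h
  · -- T ≤ Z(E), so E = E² centralises X
    left
    have hTZ : T ≤ idealCenter E := le_trans le_sup_left h.le
    have hcen : ∀ c ∈ E, ∀ y ∈ idealCenter E, ⁅c, y⁆ = 0 := by
      intro c hc y hy
      rw [← lie_skew, hy.2 c hc, neg_zero]
    exact perfect_step hE.1 hTZ hcen
  · -- E = T ⊔ Z(E), so E = E² ≤ T ≤ X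
    right
    have h1 : E = ⁅E, E⁆ := hE.1.symm
    have h2 : (⁅E, E⁆ : LieIdeal F L) ≤ T := by
      conv_lhs => rw [← h]
      rw [LieSubmodule.lie_sup, LieSubmodule.sup_lie, LieSubmodule.sup_lie]
      refine sup_le (sup_le ?_ ?_) (sup_le ?_ ?_)
      · exact LieSubmodule.lie_le_left _ _
      · exact LieSubmodule.lie_le_right _ _
      · exact LieSubmodule.lie_le_left _ _
      · exact le_trans (LieSubmodule.mono_lie (idealCenter_le E) le_rfl)
          (by rw [lie_idealCenter_eq_bot]; exact bot_le)
    calc E = ⁅E, E⁆ := h1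
    _ ≤ T := h2
    _ ≤ X := LieSubmodule.lie_le_right _ _

/-- A quasi-minimal ideal is contained in `A ⊔ C_L(A/B)` for every chief factor `A/B`. -/
lemma quasiMinimal_le_sup_chiefCentralizer {E : LieIdeal F L} (hE : IsQuasiMinimal E)
    {A B : LieIdeal F L} : E ≤ A ⊔ chiefCentralizer A B := by
  rcases quasiMinimal_dichotomy hE A with h | h
  · refine le_trans ?_ (le_sup_right : chiefCentralizer A B ≤ _)
    intro e he a ha
    rw [h e he a ha]; exact B.zero_mem
  · exact le_trans h le_sup_left

/-- A nilpotent ideal centralises every chief factor. -/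
lemma nilpotent_le_chiefCentralizer {I : LieIdeal F L} (hI : LieModule.IsNilpotent I I)
    {A B : LieIdeal F L} (hAB : IsMinModIdeal B A) : I ≤ chiefCentralizer A B := by
  obtain ⟨m, hm⟩ := gam_eq_bot_of_isNilpotent I hI
  have key : ⁅I, A⁆ ≤ B := by
    have hsub : (⁅I, A⁆ : LieIdeal F L) ⊔ B ≤ A := sup_le (LieSubmodule.lie_le_right _ _) hAB.1.le
    rcases hAB.2 (⁅I, A⁆ ⊔ B) le_sup_right hsub with h | h
    · exact le_trans le_sup_left h.le
    · -- A = ⁅I,A⁆ ⊔ B; iterate to contradict nilpotency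
      exfalso
      let U : ℕ → LieIdeal F L := fun k => Nat.rec A (fun _ V => ⁅I, V⁆) k
      have hUsucc : ∀ k, U (k+1) = ⁅I, U k⁆ := fun k => rfl
      have hUB : ∀ k, U k ⊔ B = A := by
        intro k
        induction k with
        | zero => exact sup_eq_left.mpr hAB.1.le
        | succ k ih =>
            have e1 : (⁅I, U k ⊔ B⁆ : LieIdeal F L) ⊔ B = A := by rw [ih]; exact h
            calc U (k+1) ⊔ B = ⁅I, U k⁆ ⊔ B := by rw [hUsucc]
            _ = ⁅I, U k⁆ ⊔ (⁅I, B⁆ ⊔ B) := by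
                rw [sup_eq_right.mpr (LieSubmodule.lie_le_right B I)]
            _ = (⁅I, U k⁆ ⊔ ⁅I, B⁆) ⊔ B := (sup_assoc _ _ _).symm
            _ = ⁅I, U k ⊔ B⁆ ⊔ B := by rw [LieSubmodule.lie_sup]
            _ = A := e1
      have hUgam : ∀ k, U (k+1) ≤ gam I k := by
        intro k
        induction k with
        | zero => exact LieSubmodule.lie_le_left _ _
        | succ k ih =>
            calc U (k+1+1) = ⁅I, U (k+1)⁆ := hUsucc (k+1)
            _ ≤ ⁅I, gam I k⁆ := LieSubmodule.mono_lie le_rfl ih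
            _ = gam I (k+1) := rfl
      have hbot : U (m+1) = ⊥ := le_bot_iff.mp (hm ▸ hUgam m)
      have hfin := hUB (m+1)
      rw [hbot, bot_sup_eq] at hfin
      exact hAB.1.ne hfin
  intro x hx a ha
  exact key (LieSubmodule.lie_mem_lie hx ha)

section Chains

/-- Relative `C`-central chains of ideals. -/
def HCfrom (C P X : LieIdeal F L) : Prop :=
  ∃ n : ℕ, ∃ c : ℕ → LieIdeal F L, c 0 = P ∧ c n = X ∧ ∀ i < n, ⁅C, c (i+1)⁆ ≤ c i

lemma HCfrom_self (C X : LieIdeal F L) : HCfrom C X X :=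
  ⟨0, fun _ => X, rfl, rfl, by omega⟩

lemma HCfrom_single {C P X : LieIdeal F L} (h : ⁅C, X⁆ ≤ P) : HCfrom C P X := by
  refine ⟨1, fun i => if i = 0 then P else X, by simp, by simp, ?_⟩
  intro i hi
  have : i = 0 := by omega
  subst this
  simpa using h

lemma HCfrom_trans {C P Q X : LieIdeal F L} (h1 : HCfrom C P Q) (h2 : HCfrom C Q X) :
    HCfrom C P X := by
  obtain ⟨n, c, hc0, hcn, hc⟩ := h1
  obtain ⟨m, d, hd0, hdm, hd⟩ := h2
  refine ⟨n + m, fun i => if i ≤ n then c i else d (i - n), by simp [hc0], ?_, ?_⟩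
  · by_cases hm : m = 0
    · subst hm; simp only [add_zero, le_refl, if_pos]
      rw [hcn, ← hd0, ← hdm]
    · have : ¬ n + m ≤ n := by omega
      simp only [this, if_neg, if_false]
      simpa using hdm
  · intro i hi
    by_cases h3 : i + 1 ≤ n
    · simp only [if_pos h3, if_pos (by omega : i ≤ n)]
      exact hc i (by omega)
    · by_cases h4 : i ≤ n
      · have hin : i = n := by omega
        subst hin
        simp only [if_neg h3, if_pos le_rfl]
        have e : i + 1 - i = 1 := by omega
        rw [e, hcn, ← hd0]
        exact hd 0 (by omega)
      · simp only [if_neg h3, if_neg h4]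
        have e : i + 1 - n = (i - n) + 1 := by omega
        rw [e]
        exact hd (i - n) (by omega)

lemma HCfrom_sup_right {C X Y : LieIdeal F L} (h : HCfrom C ⊥ X) : HCfrom C Y (X ⊔ Y) := by
  obtain ⟨n, c, hc0, hcn, hc⟩ := h
  refine ⟨n, fun i => c i ⊔ Y, by simp only [hc0, bot_sup_eq], by simp only [hcn], ?_⟩
  intro i hi
  dsimp only
  rw [LieSubmodule.lie_sup]
  exact sup_le (le_trans (hc i hi) le_sup_left)
    (le_trans (LieSubmodule.lie_le_right _ _) le_sup_right)

lemma HCfrom_bot_sup {C X Y : LieIdeal F L} (hX : HCfrom C ⊥ X) (hY : HCfrom C ⊥ Y) :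
    HCfrom C ⊥ (X ⊔ Y) :=
  HCfrom_trans hY (HCfrom_sup_right hX)

/-- A perfect ideal centralises anything reachable by a `C`-central chain from `⊥`. -/
lemma centralizes_of_HCfrom {C X : LieIdeal F L} (hC : ⁅C, C⁆ = C) (h : HCfrom C ⊥ X) :
    ∀ a ∈ C, ∀ x ∈ X, ⁅a, x⁆ = 0 := by
  obtain ⟨n, c, hc0, hcn, hc⟩ := h
  have key : ∀ i ≤ n, ∀ a ∈ C, ∀ x ∈ c i, ⁅a, x⁆ = 0 := by
    intro i
    induction i with
    | zero =>
        intro _ a _ x hx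
        rw [hc0, LieSubmodule.mem_bot] at hx
        rw [hx, lie_zero]
    | succ i ih =>
        intro hin
        exact perfect_step hC (hc i (by omega)) (ih (by omega))
  rw [← hcn]
  exact key n le_rfl

/-- If `C` is reachable by a `C`-central chain from `⊥`, then `C` is nilpotent. -/
lemma isNilpotent_of_HCfrom {C X : LieIdeal F L} (h : HCfrom C ⊥ X) (hCX : C ≤ X) :
    LieModule.IsNilpotent C C := by
  obtain ⟨n, c, hc0, hcn, hc⟩ := h
  have key : ∀ k ≤ n, gam C k ≤ c (n - k) := by
    intro k
    induction k with
    | zero =>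
        intro _
        simpa [gam, hcn] using hCX
    | succ k ih =>
        intro hkn
        have e : n - k = (n - (k+1)) + 1 := by omega
        calc gam C (k+1) = ⁅C, gam C k⁆ := rfl
        _ ≤ ⁅C, c (n - k)⁆ := LieSubmodule.mono_lie le_rfl (ih (by omega))
        _ = ⁅C, c ((n - (k+1)) + 1)⁆ := by rw [← e]
        _ ≤ c (n - (k+1)) := hc _ (by omega)
  have : gam C n = ⊥ := by
    have := key n le_rfl
    rw [Nat.sub_self, hc0] at this
    exact le_bot_iff.mp this
  exact isNilpotent_of_gam_eq_bot C this

lemma chain_mono {n : ℕ} {c : ℕ → LieIdeal F L} (h : ∀ i < n, c i ≤ c (i+1)) :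
    ∀ i j, i ≤ j → j ≤ n → c i ≤ c j := by
  intro i j
  induction j with
  | zero =>
      intro hij _
      have : i = 0 := by omega
      subst this; exact le_rfl
  | succ j ih =>
      intro hij hjn
      rcases Nat.lt_or_ge i (j+1) with h1 | h1
      · exact le_trans (ih (by omega) (by omega)) (h j (by omega))
      · have : i = j + 1 := by omega
        subst this; exact le_rfl

end Chains

section FinDim
variable [FiniteDimensional F L]

lemma exists_minimal_mem {s : Set (LieIdeal F L)} (hs : s.Nonempty) :
    ∃ m ∈ s, ∀ x ∈ s, ¬ x < m :=
  (LieSubmodule.wellFoundedLT_of_isArtinian F L L).wf.has_min s hs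

/-- Every containment of ideals refines to a chain of chief factors. -/
lemma exists_chief_chain (P R : LieIdeal F L) (h : P ≤ R) :
    ∃ n : ℕ, ∃ c : ℕ → LieIdeal F L, c 0 = P ∧ c n = R ∧
      ∀ i < n, c i ≤ c (i+1) ∧ IsMinModIdeal (c i) (c (i+1)) := by
  suffices H : ∀ d : ℕ, ∀ P R : LieIdeal F L, P ≤ R →
      Module.finrank F R.toSubmodule - Module.finrank F P.toSubmodule ≤ d →
      ∃ n : ℕ, ∃ c : ℕ → LieIdeal F L, c 0 = P ∧ c n = R ∧
        ∀ i < n, c i ≤ c (i+1) ∧ IsMinModIdeal (c i) (c (i+1)) by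
    exact H _ P R h le_rfl
  intro d
  induction d with
  | zero =>
      intro P R hPR hrank
      have : P = R := by
        have hle : Module.finrank F R.toSubmodule ≤ Module.finrank F P.toSubmodule := by omega
        have := Submodule.eq_of_le_of_finrank_le (hPR : P.toSubmodule ≤ R.toSubmodule) hle
        exact LieSubmodule.toSubmodule_injective this
      exact ⟨0, fun _ => P, rfl, this ▸ rfl, by omega⟩
  | succ d ih =>
      intro P R hPR hrank
      by_cases hPReq : P = R
      · exact ⟨0, fun _ => P, rfl, hPReq ▸ rfl, by omega⟩
      · have hlt : P < R := lt_of_le_of_ne hPR hPReq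
        obtain ⟨Y, ⟨hPY, hYR⟩, hmin⟩ := exists_minimal_mem (s := {X | P < X ∧ X ≤ R}) ⟨R, hlt, le_rfl⟩
        have hchief : IsMinModIdeal P Y := by
          refine ⟨hPY, ?_⟩
          intro B hPB hBY
          rcases eq_or_lt_of_le hPB with h1 | h1
          · exact Or.inl h1.symm
          · rcases eq_or_lt_of_le hBY with h2 | h2
            · exact Or.inr h2
            · exact absurd h2 (hmin B ⟨h1, le_trans hBY hYR⟩)
        have hrankY : Module.finrank F P.toSubmodule < Module.finrank F Y.toSubmodule :=
          Submodule.finrank_lt_finrank_of_lt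
            ((LieSubmodule.toSubmodule_orderEmbedding F L L).strictMono hPY)
        have hrankYR : Module.finrank F Y.toSubmodule ≤ Module.finrank F R.toSubmodule :=
          Submodule.finrank_mono (hYR : Y.toSubmodule ≤ R.toSubmodule)
        obtain ⟨n, c, hc0, hcn, hc⟩ := ih Y R hYR (by omega)
        refine ⟨n + 1, fun i => if i = 0 then P else c (i - 1), by simp, ?_, ?_⟩
        · simp only [Nat.add_eq_zero, one_ne_zero, and_false, if_neg, Nat.add_sub_cancel]
          exact hcn
        · intro i hi
          by_cases h0 : i = 0
          · subst h0
            simp only [if_pos rfl, one_ne_zero, if_false, Nat.sub_self, if_neg]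
            rw [hc0]
            exact ⟨hPY.le, hchief⟩
          · simp only [if_neg h0, if_neg (by omega : ¬ i + 1 = 0)]
            have e : i + 1 - 1 = (i - 1) + 1 := by omega
            rw [e]
            exact hc (i - 1) (by omega)

lemma chiefCentralizer_lie_le (A B : LieIdeal F L) : ⁅chiefCentralizer A B, A⁆ ≤ B := by
  rw [LieSubmodule.lie_le_iff]
  intro x hx a ha
  exact hx a ha

lemma chief_step {C A B : LieIdeal F L} (hC : C ≤ A ⊔ chiefCentralizer A B) :
    ⁅C, A⁆ ≤ ⁅A, A⁆ ⊔ B :=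
  calc ⁅C, A⁆ ≤ ⁅A ⊔ chiefCentralizer A B, A⁆ := LieSubmodule.mono_lie hC le_rfl
  _ = ⁅A, A⁆ ⊔ ⁅chiefCentralizer A B, A⁆ := LieSubmodule.sup_lie _ _ _
  _ ≤ ⁅A, A⁆ ⊔ B := sup_le le_sup_left (le_trans (chiefCentralizer_lie_le A B) le_sup_right)

variable {C : LieIdeal F L}

lemma HCfrom_segment (hCD : ∀ A B : LieIdeal F L, IsMinModIdeal B A →
      C ≤ A ⊔ chiefCentralizer A B) (I : LieIdeal F L) (j : ℕ) :
    HCfrom C (gam I (j+1)) (gam I j) := by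
  obtain ⟨n, c, hc0, hcn, hc⟩ := exists_chief_chain (gam I (j+1)) (gam I j) (gam_succ_le I j)
  refine ⟨n, c, hc0, hcn, ?_⟩
  intro i hi
  have hmono : ∀ i' < n, c i' ≤ c (i'+1) := fun i' hi' => (hc i' hi').1
  have hup : c (i+1) ≤ gam I j := hcn ▸ chain_mono hmono (i+1) n (by omega) le_rfl
  have hdown : gam I (j+1) ≤ c i := hc0 ▸ chain_mono hmono 0 i (by omega) (by omega)
  have h1 : ⁅C, c (i+1)⁆ ≤ ⁅c (i+1), c (i+1)⁆ ⊔ c i := chief_step (hCD _ _ (hc i hi).2)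
  have h2 : ⁅c (i+1), c (i+1)⁆ ≤ gam I (j+1) :=
    le_trans (LieSubmodule.mono_lie hup hup) (lie_gam_gam_le I j)
  exact le_trans h1 (sup_le (le_trans h2 hdown) le_rfl)

lemma HCfrom_bot_of_nilpotent (hCD : ∀ A B : LieIdeal F L, IsMinModIdeal B A →
      C ≤ A ⊔ chiefCentralizer A B) {I : LieIdeal F L} (hI : LieModule.IsNilpotent I I) :
    HCfrom C ⊥ I := by
  obtain ⟨m, hm⟩ := gam_eq_bot_of_isNilpotent I hI
  have key : ∀ t, HCfrom C ⊥ (gam I (m - t)) := by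
    intro t
    induction t with
    | zero =>
        rw [Nat.sub_zero, hm]
        exact HCfrom_self C ⊥
    | succ t ih =>
        by_cases htm : t < m
        · have e : m - t = (m - (t+1)) + 1 := by omega
          rw [e] at ih
          exact HCfrom_trans ih (HCfrom_segment hCD I (m - (t+1)))
        · have e : m - (t+1) = m - t := by omega
          rw [e]
          exact ih
  have := key m
  rwa [Nat.sub_self] at this

lemma HCfrom_bot_nilrad (hCD : ∀ A B : LieIdeal F L, IsMinModIdeal B A →
      C ≤ A ⊔ chiefCentralizer A B) : HCfrom C ⊥ (nilrad F L) := by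
  obtain ⟨t, hts, hsup⟩ := (CompleteLattice.WellFoundedGT.isSupFiniteCompact (LieIdeal F L))
    {I : LieIdeal F L | LieModule.IsNilpotent I I}
  rw [nilrad, hsup]
  clear hsup
  classical
  induction t using Finset.induction_on with
  | empty => simpa using HCfrom_self C ⊥
  | insert _ _ hnotmem =>
      rename_i a s ih
      rw [Finset.sup_insert]
      have ha : LieModule.IsNilpotent a a := hts (Finset.mem_insert_self a s)
      have hsub : ↑s ⊆ {I : LieIdeal F L | LieModule.IsNilpotent I I} :=
        fun x hx => hts (Finset.mem_insert_of_mem hx)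
      exact HCfrom_bot_sup (HCfrom_bot_of_nilpotent hCD ha) (ih hsub)

/-- The main containment: the intersection of `A + C_L(A/B)` over chief factors is contained
in `N(L) + (sum of quasi-minimal ideals)`. -/
lemma D_le_Nprime :
    (⨅ (A : LieIdeal F L) (B : LieIdeal F L) (_ : IsMinModIdeal B A),
        (A ⊔ chiefCentralizer A B : LieIdeal F L)) ≤
      nilrad F L ⊔ sSup {A : LieIdeal F L | IsQuasiMinimal A} := by
  set Q : LieIdeal F L := sSup {A : LieIdeal F L | IsQuasiMinimal A} with hQdef
  set N' : LieIdeal F L := nilrad F L ⊔ Q with hN'def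
  set D : LieIdeal F L := ⨅ (A : LieIdeal F L) (B : LieIdeal F L) (_ : IsMinModIdeal B A),
      (A ⊔ chiefCentralizer A B : LieIdeal F L) with hDdef
  have hDle : ∀ A B : LieIdeal F L, IsMinModIdeal B A → D ≤ A ⊔ chiefCentralizer A B := by
    intro A B h
    calc D ≤ ⨅ (B : LieIdeal F L) (_ : IsMinModIdeal B A), (A ⊔ chiefCentralizer A B) :=
          iInf_le _ _
    _ ≤ ⨅ (_ : IsMinModIdeal B A), (A ⊔ chiefCentralizer A B) := iInf_le _ _
    _ ≤ A ⊔ chiefCentralizer A B := iInf_le _ h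
  by_contra hD
  have hN'D : N' ≤ D := by
    refine le_iInf fun A => le_iInf fun B => le_iInf fun hAB => ?_
    refine sup_le ?_ ?_
    · exact sSup_le fun I hI =>
        le_trans (nilpotent_le_chiefCentralizer hI hAB) le_sup_right
    · exact sSup_le fun E hE => quasiMinimal_le_sup_chiefCentralizer hE
  have hlt : N' < D := lt_of_le_not_ge hN'D hD
  obtain ⟨A, ⟨hNA, hAD⟩, hminA⟩ :=
    exists_minimal_mem (s := {X : LieIdeal F L | N' < X ∧ X ≤ D}) ⟨D, hlt, le_rfl⟩
  have hAchief : IsMinModIdeal N' A := by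
    refine ⟨hNA, fun B hNB hBA => ?_⟩
    rcases eq_or_lt_of_le hNB with h1 | h1
    · exact Or.inl h1.symm
    · rcases eq_or_lt_of_le hBA with h2 | h2
      · exact Or.inr h2
      · exact absurd h2 (hminA B ⟨h1, le_trans hBA hAD⟩)
  obtain ⟨C, hCA, hminC⟩ :=
    exists_minimal_mem (s := {X : LieIdeal F L | X ⊔ N' = A}) ⟨A, sup_eq_left.mpr hNA.le⟩
  have hP2 : ∀ Y : LieIdeal F L, Y ≤ C → Y ⊔ N' = A → Y = C := by
    intro Y hYC hY
    rcases eq_or_lt_of_le hYC with h1 | h1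
    · exact h1
    · exact absurd h1 (hminC Y hY)
  have hCD2 : C ≤ D := le_trans (le_trans le_sup_left hCA.le) hAD
  have hCDprop : ∀ A' B' : LieIdeal F L, IsMinModIdeal B' A' →
      C ≤ A' ⊔ chiefCentralizer A' B' := fun A' B' h => le_trans hCD2 (hDle A' B' h)
  have hCnotN' : ¬ C ≤ N' := by
    intro h
    have : A = N' := by rw [← hCA]; exact sup_eq_right.mpr h
    exact hNA.ne' this
  -- no quasi-minimal component lies in C
  have hP4 : ∀ E : LieIdeal F L, IsQuasiMinimal E → ¬ E ≤ C := by
    intro E hE hEC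
    have hEN' : E ≤ N' := le_trans (le_sSup (show E ∈ {A : LieIdeal F L | IsQuasiMinimal A} from hE)) le_sup_right
    have h1 : C ≤ E ⊔ chiefCentralizer E (idealCenter E) := hCDprop _ _ hE.2
    have hmod : E ⊔ (chiefCentralizer E (idealCenter E) ⊓ C) =
        (E ⊔ chiefCentralizer E (idealCenter E)) ⊓ C :=
      (sup_inf_assoc_of_le (chiefCentralizer E (idealCenter E)) hEC).symm
    have h2 : C ≤ E ⊔ (chiefCentralizer E (idealCenter E) ⊓ C) := by
      rw [hmod]; exact le_inf h1 le_rfl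
    have hC1C : E ⊔ (chiefCentralizer E (idealCenter E) ⊓ C) = C :=
      le_antisymm (sup_le hEC inf_le_right) h2
    have hC1A : (chiefCentralizer E (idealCenter E) ⊓ C) ⊔ N' = A := by
      calc (chiefCentralizer E (idealCenter E) ⊓ C) ⊔ N'
          = (chiefCentralizer E (idealCenter E) ⊓ C) ⊔ (E ⊔ N') := by
            rw [sup_eq_right.mpr hEN']
      _ = (E ⊔ (chiefCentralizer E (idealCenter E) ⊓ C)) ⊔ N' := by
            rw [← sup_assoc, sup_comm (chiefCentralizer E (idealCenter E) ⊓ C) E]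
      _ = C ⊔ N' := by rw [hC1C]
      _ = A := hCA
    have hC1eq : chiefCentralizer E (idealCenter E) ⊓ C = C := hP2 _ inf_le_right hC1A
    have hCcc : C ≤ chiefCentralizer E (idealCenter E) := hC1eq ▸ inf_le_left
    have hEcen : ∀ e ∈ E, ∀ x ∈ C, ⁅e, x⁆ = 0 := by
      refine perfect_step hE.1 (Y := idealCenter E) ?_ ?_
      · rw [LieSubmodule.lie_le_iff]
        intro e he x hx
        rw [← neg_neg (⁅e, x⁆ : L), ← lie_skew e x, neg_neg]
        exact (idealCenter E).neg_mem (hCcc hx e he)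
      · intro c hc y hy
        rw [← lie_skew, hy.2 c hc, neg_zero]
    have hEE : ⁅E, E⁆ = ⊥ :=
      (LieSubmodule.lie_eq_bot_iff _ _).mpr fun e he f hf => hEcen e he f (hEC hf)
    have hEbot : E = ⊥ := by rw [← hE.1, hEE]
    have := hE.2.1
    rw [hEbot] at this
    exact not_lt_bot this
  have hQle : Q ≤ centralizer C := by
    refine sSup_le fun E hE => ?_
    rcases quasiMinimal_dichotomy hE C with h | h
    · intro e he
      exact fun x hx => h e he x hx
    · exact absurd h (hP4 E hE)
  have hlieCQ : (⁅C, Q⁆ : LieIdeal F L) = ⊥ :=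
    (LieSubmodule.lie_eq_bot_iff _ _).mpr fun x hx q hq => by
      rw [← lie_skew, (hQle hq) x hx, neg_zero]
  have hCN'le : (⁅C, N'⁆ : LieIdeal F L) ≤ nilrad F L := by
    rw [hN'def, LieSubmodule.lie_sup, hlieCQ]
    exact sup_le (LieSubmodule.lie_le_right _ _) bot_le
  have hP3 : ∀ Y : LieIdeal F L, C ⊓ N' ≤ Y → Y ≤ C → Y = C ⊓ N' ∨ Y = C := by
    intro Y h1 h2
    have hYA : Y ⊔ N' ≤ A := by
      rw [← hCA]; exact sup_le (le_trans h2 le_sup_left) le_sup_right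
    rcases hAchief.2 (Y ⊔ N') le_sup_right hYA with h | h
    · left
      refine le_antisymm (le_inf h2 (le_trans le_sup_left h.le)) h1
    · right
      exact hP2 Y h2 h
  have hstep1 : HCfrom C (nilrad F L) (nilrad F L ⊔ (C ⊓ N')) := by
    refine HCfrom_single ?_
    rw [LieSubmodule.lie_sup]
    refine sup_le (LieSubmodule.lie_le_right _ _) ?_
    exact le_trans (LieSubmodule.mono_lie le_rfl inf_le_right) hCN'le
  rcases hP3 (⁅C, C⁆ ⊔ (C ⊓ N')) le_sup_right
      (sup_le (LieSubmodule.lie_le_left _ _) inf_le_left) with hb | ha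
  · -- case (b): C² ≤ C ⊓ N', so C is nilpotent: contradiction
    have hCC : (⁅C, C⁆ : LieIdeal F L) ≤ C ⊓ N' := le_trans le_sup_left hb.le
    have hstep2 : HCfrom C (nilrad F L ⊔ (C ⊓ N')) (nilrad F L ⊔ C) := by
      refine HCfrom_single ?_
      rw [LieSubmodule.lie_sup]
      refine sup_le (le_trans (LieSubmodule.lie_le_right _ _) le_sup_left) ?_
      exact le_trans hCC le_sup_right
    have htot : HCfrom C ⊥ (nilrad F L ⊔ C) :=
      HCfrom_trans (HCfrom_bot_nilrad hCDprop) (HCfrom_trans hstep1 hstep2)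
    have hnil : LieModule.IsNilpotent C C := isNilpotent_of_HCfrom htot le_sup_right
    exact hCnotN' (le_trans (le_sSup hnil) le_sup_left)
  · -- case (a): C is perfect and quasi-minimal: contradiction
    have hperf : (⁅C, C⁆ : LieIdeal F L) = C := by
      refine hP2 _ (LieSubmodule.lie_le_left _ _) ?_
      calc (⁅C, C⁆ : LieIdeal F L) ⊔ N' = ⁅C, C⁆ ⊔ ((C ⊓ N') ⊔ N') := by
            rw [sup_eq_right.mpr (inf_le_right : C ⊓ N' ≤ N')]
      _ = (⁅C, C⁆ ⊔ (C ⊓ N')) ⊔ N' := by rw [sup_assoc]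
      _ = C ⊔ N' := by rw [ha]
      _ = A := hCA
    have hM : HCfrom C ⊥ (nilrad F L ⊔ (C ⊓ N')) :=
      HCfrom_trans (HCfrom_bot_nilrad hCDprop) hstep1
    have hcen : ∀ a ∈ C, ∀ x ∈ (nilrad F L ⊔ (C ⊓ N') : LieIdeal F L), ⁅a, x⁆ = 0 :=
      centralizes_of_HCfrom hperf hM
    have hMZ : C ⊓ N' ≤ idealCenter C := by
      intro m hm
      refine ⟨hm.1, fun y hy => ?_⟩
      rw [← lie_skew, hcen y hy m (le_sup_right (α := LieIdeal F L) hm), neg_zero]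
    have hZltC : idealCenter C < C := by
      refine lt_of_le_of_ne (idealCenter_le C) ?_
      intro h
      have hab : (⁅C, C⁆ : LieIdeal F L) = ⊥ := by
        refine (LieSubmodule.lie_eq_bot_iff _ _).mpr fun x hx y hy => ?_
        have : x ∈ idealCenter C := by rw [h]; exact hx
        exact this.2 y hy
      have : C = ⊥ := by rw [← hperf, hab]
      exact hCnotN' (this ▸ bot_le)
    have hquasi : IsQuasiMinimal C := by
      refine ⟨hperf, hZltC, ?_⟩
      intro Y hZY hYC
      rcases hP3 (Y ⊔ (C ⊓ N')) le_sup_right (sup_le hYC inf_le_left) with h | h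
      · left
        have hYM : Y ≤ C ⊓ N' := le_trans le_sup_left h.le
        exact le_antisymm (le_trans hYM hMZ) hZY
      · right
        refine hP2 Y hYC ?_
        calc Y ⊔ N' = Y ⊔ ((C ⊓ N') ⊔ N') := by
              rw [sup_eq_right.mpr (inf_le_right : C ⊓ N' ≤ N')]
        _ = (Y ⊔ (C ⊓ N')) ⊔ N' := by rw [sup_assoc]
        _ = C ⊔ N' := by rw [h]
        _ = A := hCA
    exact hCnotN' (le_trans (le_sSup (show C ∈ {A : LieIdeal F L | IsQuasiMinimal A} from hquasi)) le_sup_right)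

end FinDim
end Aux

/-- `N†(L)` is the intersection of the `A + C_L(A/B)` over all chief factors `A/B` of `L`. -/
theorem stmt_13 (F : Type*) [Field F] (L : Type*) [LieRing L] [LieAlgebra F L]
    [FiniteDimensional F L] :
    (Ndagger F L : Set L) =
      ⋂ (A : LieIdeal F L) (B : LieIdeal F L) (_ : IsMinModIdeal B A),
        ((A ⊔ chiefCentralizer A B : LieIdeal F L) : Set L) := by
  ext x
  simp only [Set.mem_iInter, SetLike.mem_coe]
  constructor
  · intro hx A B hAB
    have hNle : nilrad F L ≤ A ⊔ chiefCentralizer A B :=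
      sSup_le fun I hI => le_trans (nilpotent_le_chiefCentralizer hI hAB) le_sup_right
    have hsub : Ndagger F L ≤ LieIdeal.toLieSubalgebra F L (A ⊔ chiefCentralizer A B) := by
      refine sup_le ?_ ?_
      · intro y hy
        exact hNle hy
      · rw [Edagger, LieSubalgebra.lieSpan_le]
        intro y hy
        simp only [Set.mem_iUnion, Set.mem_setOf_eq] at hy
        obtain ⟨E, hE, hyE⟩ := hy
        exact quasiMinimal_le_sup_chiefCentralizer hE hyE
    exact hsub hx
  · intro hx
    have hxD : x ∈ (⨅ (A : LieIdeal F L) (B : LieIdeal F L) (_ : IsMinModIdeal B A),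
        (A ⊔ chiefCentralizer A B : LieIdeal F L)) :=
      (LieSubmodule.mem_iInf _).mpr fun A => (LieSubmodule.mem_iInf _).mpr fun B =>
        (LieSubmodule.mem_iInf _).mpr fun h => hx A B h
    have hxN' := D_le_Nprime hxD
    rw [LieSubmodule.mem_sup] at hxN'
    obtain ⟨y, hy, z, hz, rfl⟩ := hxN'
    have hyN : y ∈ Ndagger F L :=
      (le_sup_left : LieIdeal.toLieSubalgebra F L (nilrad F L) ≤ Ndagger F L) hy
    have hzE : z ∈ Edagger F L := by
      have h1 : (sSup {A : LieIdeal F L | IsQuasiMinimal A} : LieIdeal F L).toSubmodule ≤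
          (Edagger F L).toSubmodule := by
        rw [LieSubmodule.sSup_toSubmodule_eq_iSup]
        refine iSup₂_le fun E hE => ?_
        intro w hw
        exact LieSubalgebra.subset_lieSpan (Set.mem_biUnion hE hw)
      exact h1 hz
    exact (Ndagger F L).add_mem hyN ((le_sup_right : Edagger F L ≤ Ndagger F L) hzE)

end Paper
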